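/- For all n ≥ 0, the Hankel determinant D_{3,-1}(n) = det(C_{3,i+j-1})_{i,j=0}^{n-1} satisfies: D_{3,-1}(3n) = (−1)^n, D_{3,-1}(3n+2) = (−1)^{n+1}, and D_{3,-1}(3n+1) = 0. -/

import Mathlib

/-- The `k`-th convolution power of the Catalan numbers,
`C_{k,n} = (k/(2n+k)) * binom(2n+k, n)` for `n ≥ 0`, and `C_{k,n} = 0` for `n < 0`. -/
noncomputable def catalanConv (k : ℕ) (n : ℤ) : ℚ :=
  if 0 ≤ n then (k : ℚ) / (2 * (n : ℚ) + k) * ((2 * n.toNat + k).choose n.toNat) else 0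

/-- The Hankel determinant `D_{k,m}(N) = det (C_{k,i+j+m})_{i,j=0}^{N-1}`, `D_{k,m}(0) = 1`. -/
noncomputable def hankelDet (k : ℕ) (m : ℤ) (N : ℕ) : ℚ :=
  Matrix.det (Matrix.of fun i j : Fin N => catalanConv k ((i : ℤ) + (j : ℤ) + m))


/-- Binomial coefficient with integer lower index, zero outside `[0, n]`. -/
def cb (n : ℕ) (k : ℤ) : ℚ := if 0 ≤ k ∧ k ≤ n then (n.choose k.toNat : ℚ) else 0

lemma cb_coe (n u : ℕ) : cb n u = (n.choose u : ℚ) := by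
  unfold cb
  by_cases h : (u : ℤ) ≤ n
  · simp [h]
  · have hu : n < u := by exact_mod_cast not_le.mp h
    simp [h, Nat.choose_eq_zero_of_lt hu]

lemma cb_neg {n : ℕ} {k : ℤ} (h : k < 0) : cb n k = 0 := by
  unfold cb; rw [if_neg]; rintro ⟨h0, -⟩; omega

lemma cb_gt {n : ℕ} {k : ℤ} (h : (n : ℤ) < k) : cb n k = 0 := by
  unfold cb; rw [if_neg]; rintro ⟨-, h1⟩; omega

lemma cb_symm (n : ℕ) (k : ℤ) : cb n k = cb n ((n : ℤ) - k) := by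
  by_cases h : 0 ≤ k ∧ k ≤ n
  · have h2 : 0 ≤ (n : ℤ) - k ∧ (n : ℤ) - k ≤ n := by omega
    unfold cb
    rw [if_pos h, if_pos h2]
    have ht : ((n : ℤ) - k).toNat = n - k.toNat := by omega
    have hk : k.toNat ≤ n := by omega
    rw [ht, Nat.choose_symm hk]
  · have h2 : ¬ (0 ≤ (n : ℤ) - k ∧ (n : ℤ) - k ≤ n) := by omega
    unfold cb; rw [if_neg h, if_neg h2]

lemma cb_pascal (n : ℕ) (k : ℤ) : cb (n + 1) k = cb n k + cb n (k - 1) := by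
  rcases lt_or_ge k 0 with h | h
  · rw [cb_neg h, cb_neg h, cb_neg (by omega)]; ring
  · obtain ⟨u, rfl⟩ := Int.eq_ofNat_of_zero_le h
    cases u with
    | zero =>
      have h1 : cb n (((0:ℕ):ℤ) - 1) = 0 := cb_neg (by norm_num)
      rw [h1, add_zero, show ((0:ℕ):ℤ) = ((0:ℕ):ℤ) from rfl, cb_coe, cb_coe]
      simp
    | succ s =>
      have : ((s + 1 : ℕ) : ℤ) - 1 = (s : ℕ) := by push_cast; ring
      rw [this, cb_coe, cb_coe, cb_coe, Nat.choose_succ_succ]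
      push_cast; ring

/-- Vandermonde convolution for `cb`. -/
lemma vand (m : ℕ) : ∀ (n : ℕ) (z : ℤ),
    ∑ u ∈ Finset.range (m + 1), cb m u * cb n (z - u) = cb (m + n) z := by
  induction m with
  | zero => intro n z; simp [cb_coe]
  | succ m ih =>
    intro n z
    have step : ∀ u ∈ Finset.range (m + 2),
        cb (m + 1) u * cb n (z - u) = cb m u * cb n (z - u) + cb m ((u : ℤ) - 1) * cb n (z - u) := by
      intro u _
      rw [cb_pascal]; ring
    rw [Finset.sum_congr rfl step, Finset.sum_add_distrib]
    have e1 : ∑ u ∈ Finset.range (m + 2), cb m u * cb n (z - u)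
        = ∑ u ∈ Finset.range (m + 1), cb m u * cb n (z - u) := by
      rw [Finset.sum_range_succ]
      have : cb m ((m + 1 : ℕ) : ℤ) = 0 := cb_gt (by push_cast; omega)
      rw [this]; ring
    have e2 : ∑ u ∈ Finset.range (m + 2), cb m ((u : ℤ) - 1) * cb n (z - u)
        = ∑ u ∈ Finset.range (m + 1), cb m u * cb n ((z - 1) - u) := by
      rw [Finset.sum_range_succ']
      have h0 : cb m ((0 : ℕ) - 1 : ℤ) = 0 := cb_neg (by norm_num)
      rw [show ((0:ℕ):ℤ) - 1 = -1 by norm_num] at *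
      rw [cb_neg (by norm_num)]
      rw [Finset.sum_congr rfl (fun u _ => by
        push_cast
        rw [show ((u:ℤ) + 1 - 1) = u by ring, show z - ((u:ℤ)+1) = z - 1 - u by ring])]
      ring
    rw [e1, e2, ih n z, ih n (z - 1)]
    rw [show m + 1 + n = (m + n) + 1 by ring, cb_pascal]

/-- Ballot-number entries of the lower-triangular factor. -/
def bf (i t : ℕ) : ℚ := cb (2 * i) ((i : ℤ) - t) - cb (2 * i) ((i : ℤ) - t - 1)

/-- Entries of the Hessenberg factor. -/
def gf (j t : ℕ) : ℚ := cb (2 * j) ((j : ℤ) + t - 1) - cb (2 * j) ((j : ℤ) + t + 2)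

/-- The Hankel-matrix entries in binomial-difference form. -/
def ef (n : ℕ) : ℚ := cb (2 * n) ((n : ℤ) - 1) - cb (2 * n) ((n : ℤ) - 2)

/-- The period-3 vector (1, 0, -1, 1, 0, -1, ...). -/
def vv (t : ℕ) : ℚ := if t % 3 = 0 then 1 else if t % 3 = 2 then -1 else 0

lemma vv_add3 (t : ℕ) : vv (t + 3) = vv t := by
  unfold vv; rw [Nat.add_mod_right]

lemma bf_zero {i t : ℕ} (h : i < t) : bf i t = 0 := by
  unfold bf
  rw [cb_neg (by omega), cb_neg (by omega)]; ring

lemma gf_zero {j t : ℕ} (h : j + 2 ≤ t) : gf j t = 0 := by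
  unfold gf
  rw [cb_gt (by push_cast; omega), cb_gt (by push_cast; omega)]; ring

lemma gf_diag (j : ℕ) : gf j (j + 1) = 1 := by
  unfold gf
  rw [show (j : ℤ) + ((j:ℕ) + 1 : ℕ) - 1 = ((2 * j : ℕ) : ℤ) by push_cast; ring,
    cb_coe, cb_gt (by push_cast; omega)]
  simp

/-- shifted Vandermonde helper, large range, first factor `cb m u`. -/
lemma vandA (m n : ℕ) (z : ℤ) (R : ℕ) (h : m + 1 ≤ R) :
    ∑ u ∈ Finset.range R, cb m u * cb n (z - u) = cb (m + n) z := by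
  rw [← vand m n z]
  symm
  apply Finset.sum_subset (Finset.range_subset_range.2 h)
  intro u _ hu
  rw [Finset.mem_range, not_lt] at hu
  rw [cb_gt (by exact_mod_cast Nat.lt_of_lt_of_le (by omega) (le_refl u) : (m:ℤ) < u)]
  ring

/-- shifted Vandermonde helper, first factor `cb m (u-1)`. -/
lemma vandB (m n : ℕ) (z : ℤ) (R : ℕ) (h : m + 1 ≤ R) :
    ∑ u ∈ Finset.range (R + 1), cb m ((u : ℤ) - 1) * cb n (z - u) = cb (m + n) (z - 1) := by
  rw [Finset.sum_range_succ']
  have h0 : cb m (((0:ℕ) : ℤ) - 1) = 0 := cb_neg (by norm_num)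
  rw [h0, zero_mul, add_zero]
  rw [← vandA m n (z - 1) R h]
  apply Finset.sum_congr rfl
  intro u _
  congr 1
  · congr 1; push_cast; ring
  · congr 1; push_cast; ring

/-- The folded summand. -/
def FF (i j u : ℕ) : ℚ :=
  (cb (2 * i) u - cb (2 * i) ((u : ℤ) - 1)) *
    (cb (2 * j) ((i : ℤ) + j - 1 - u) - cb (2 * j) ((i : ℤ) + j + 2 - u))

lemma FF_sym (i j u : ℕ) (hu : u ≤ i) : FF i j (i + 1 + u) = FF i j (i - u) := by
  unfold FF
  have hc : ((i - u : ℕ) : ℤ) = (i : ℤ) - u := by omega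
  have e1 : cb (2 * i) ((i + 1 + u : ℕ)) = cb (2 * i) ((i : ℤ) - u - 1) := by
    rw [cb_symm]; congr 1; push_cast; ring
  have e2 : cb (2 * i) (((i + 1 + u : ℕ) : ℤ) - 1) = cb (2 * i) ((i : ℤ) - u) := by
    rw [cb_symm]; congr 1; push_cast; ring
  have e3 : cb (2 * j) ((i : ℤ) + j - 1 - (i + 1 + u : ℕ)) = cb (2 * j) ((i : ℤ) + j + 2 - (i - u : ℕ)) := by
    rw [cb_symm]; congr 1; rw [hc]; push_cast; ring
  have e4 : cb (2 * j) ((i : ℤ) + j + 2 - (i + 1 + u : ℕ)) = cb (2 * j) ((i : ℤ) + j - 1 - (i - u : ℕ)) := by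
    rw [cb_symm]; congr 1; rw [hc]; push_cast; ring
  rw [e1, e2, e3, e4, hc]
  ring

lemma key1 (i j N : ℕ) (hiN : i < N) :
    ∑ t ∈ Finset.range N, bf i t * gf j t = ef (i + j) := by
  -- restrict to range (i+1)
  have step1 : ∑ t ∈ Finset.range N, bf i t * gf j t
      = ∑ t ∈ Finset.range (i + 1), bf i t * gf j t := by
    symm
    apply Finset.sum_subset (Finset.range_subset_range.2 (by omega))
    intro t _ ht
    rw [Finset.mem_range, not_lt] at ht
    rw [bf_zero (by omega)]; ring
  -- reflect to FF
  have step2 : ∑ t ∈ Finset.range (i + 1), bf i t * gf j t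
      = ∑ u ∈ Finset.range (i + 1), FF i j u := by
    rw [← Finset.sum_range_reflect (fun t => bf i t * gf j t) (i + 1)]
    apply Finset.sum_congr rfl
    intro u hu
    rw [Finset.mem_range] at hu
    have hui : u ≤ i := by omega
    have h1 : i + 1 - 1 - u = i - u := by omega
    rw [h1]
    unfold bf gf FF
    have hc : ((i - u : ℕ) : ℤ) = (i : ℤ) - u := by omega
    rw [hc]
    congr 2
    · congr 1; ring
    · congr 1; ring
    · congr 1; ring
    · congr 1; ring
  -- unfold to full range
  have step3 : ∑ u ∈ Finset.range (2 * i + 2), FF i j u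
      = 2 * ∑ u ∈ Finset.range (i + 1), FF i j u := by
    rw [show 2 * i + 2 = (i + 1) + (i + 1) by ring, Finset.sum_range_add]
    have : ∑ u ∈ Finset.range (i + 1), FF i j (i + 1 + u)
        = ∑ u ∈ Finset.range (i + 1), FF i j u := by
      rw [← Finset.sum_range_reflect (fun u => FF i j (i + 1 + u)) (i + 1)]
      apply Finset.sum_congr rfl
      intro u hu
      rw [Finset.mem_range] at hu
      rw [show i + 1 - 1 - u = i - u by omega, FF_sym i j (i - u) (by omega),
        show i - (i - u) = u by omega]
    rw [this]; ring
  -- evaluate full range sum by Vandermonde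
  have step4 : ∑ u ∈ Finset.range (2 * i + 2), FF i j u = 2 * ef (i + j) := by
    have expand : ∀ u ∈ Finset.range (2 * i + 2), FF i j u
        = cb (2 * i) u * cb (2 * j) (((i : ℤ) + j - 1) - u)
          - cb (2 * i) u * cb (2 * j) (((i : ℤ) + j + 2) - u)
          - cb (2 * i) ((u : ℤ) - 1) * cb (2 * j) (((i : ℤ) + j - 1) - u)
          + cb (2 * i) ((u : ℤ) - 1) * cb (2 * j) (((i : ℤ) + j + 2) - u) := by
      intro u _
      unfold FF
      ring
    rw [Finset.sum_congr rfl expand]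
    simp only [Finset.sum_add_distrib, Finset.sum_sub_distrib]
    rw [vandA (2 * i) (2 * j) ((i : ℤ) + j - 1) (2 * i + 2) (by omega),
      vandA (2 * i) (2 * j) ((i : ℤ) + j + 2) (2 * i + 2) (by omega),
      show 2 * i + 2 = (2 * i + 1) + 1 by ring,
      vandB (2 * i) (2 * j) ((i : ℤ) + j - 1) (2 * i + 1) (by omega),
      vandB (2 * i) (2 * j) ((i : ℤ) + j + 2) (2 * i + 1) (by omega)]
    have hn : 2 * i + 2 * j = 2 * (i + j) := by ring
    rw [hn]
    have s1 : cb (2 * (i + j)) ((i : ℤ) + j + 2) = cb (2 * (i + j)) (((i + j : ℕ) : ℤ) - 2) := by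
      rw [cb_symm]; congr 1; push_cast; ring
    have s2 : cb (2 * (i + j)) ((i : ℤ) + j + 2 - 1) = cb (2 * (i + j)) (((i + j : ℕ) : ℤ) - 1) := by
      rw [cb_symm]; congr 1; push_cast; ring
    have s3 : cb (2 * (i + j)) ((i : ℤ) + j - 1) = cb (2 * (i + j)) (((i + j : ℕ) : ℤ) - 1) := by
      congr 1 <;> push_cast <;> ring
    have s4 : cb (2 * (i + j)) ((i : ℤ) + j - 1 - 1) = cb (2 * (i + j)) (((i + j : ℕ) : ℤ) - 2) := by
      congr 1 <;> push_cast <;> ring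
    rw [s1, s2, s3, s4]
    unfold ef
    ring
  have h2 : (2 : ℚ) ≠ 0 := by norm_num
  rw [step1, step2]
  have := step3.symm.trans step4
  linarith [this]

/-- Telescoping summand. -/
def GG (j t : ℕ) : ℚ := vv t * cb (2 * j) ((j : ℤ) + t - 1)

lemma key2 (j : ℕ) : ∑ t ∈ Finset.range (j + 2), vv t * gf j t = 0 := by
  have expand : ∀ t ∈ Finset.range (j + 2), vv t * gf j t
      = GG j t - vv t * cb (2 * j) ((j : ℤ) + t + 2) := by
    intro t _; unfold GG gf; ring
  rw [Finset.sum_congr rfl expand, Finset.sum_sub_distrib]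
  have shift : ∀ t ∈ Finset.range (j + 2),
      vv t * cb (2 * j) ((j : ℤ) + t + 2) = GG j (3 + t) := by
    intro t _
    unfold GG
    rw [show 3 + t = t + 3 by ring, vv_add3]
    congr 2
    push_cast; ring
  rw [Finset.sum_congr rfl shift]
  have split1 : ∑ t ∈ Finset.range (3 + (j + 2)), GG j t
      = ∑ t ∈ Finset.range 3, GG j t + ∑ t ∈ Finset.range (j + 2), GG j (3 + t) :=
    Finset.sum_range_add (GG j) 3 (j + 2)
  have split2 : ∑ t ∈ Finset.range ((j + 2) + 3), GG j t
      = ∑ t ∈ Finset.range (j + 2), GG j t + ∑ t ∈ Finset.range 3, GG j ((j + 2) + t) :=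
    Finset.sum_range_add (GG j) (j + 2) 3
  have tail : ∑ t ∈ Finset.range 3, GG j ((j + 2) + t) = 0 := by
    have z : ∀ t ∈ Finset.range 3, GG j ((j + 2) + t) = 0 := by
      intro t ht
      unfold GG
      rw [cb_gt (by push_cast; omega)]
      ring
    rw [Finset.sum_congr rfl z, Finset.sum_const, smul_zero]
  have head : ∑ t ∈ Finset.range 3, GG j t = 0 := by
    rw [Finset.sum_range_succ, Finset.sum_range_succ, Finset.sum_range_one]
    unfold GG
    have v0 : vv 0 = 1 := rfl
    have v1 : vv 1 = 0 := rfl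
    have v2 : vv 2 = -1 := rfl
    rw [v0, v1, v2]
    have symm1 : cb (2 * j) ((j : ℤ) + (2:ℕ) - 1) = cb (2 * j) ((j : ℤ) + (0:ℕ) - 1) := by
      rw [cb_symm]; congr 1; push_cast; ring
    rw [symm1]
    ring
  have heq : (3 : ℕ) + (j + 2) = (j + 2) + 3 := by ring
  rw [heq] at split1
  have : ∑ t ∈ Finset.range (j + 2), GG j (3 + t)
      = ∑ t ∈ Finset.range (j + 2), GG j t := by linarith [split1, split2, tail, head]
  rw [this]
  ring

lemma key3 (j N : ℕ) (h : j < N) :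
    ∑ t ∈ Finset.range N, vv t * gf j t = if j = N - 1 then -vv N else 0 := by
  by_cases hj : j + 2 ≤ N
  · rw [if_neg (by omega)]
    rw [show (∑ t ∈ Finset.range N, vv t * gf j t) = ∑ t ∈ Finset.range (j+2), vv t * gf j t from by
      symm
      apply Finset.sum_subset (Finset.range_subset_range.2 hj)
      intro t _ ht
      rw [Finset.mem_range, not_lt] at ht
      rw [gf_zero (by omega)]; ring]
    exact key2 j
  · have hN : N = j + 1 := by omega
    subst hN
    rw [if_pos (by omega)]
    have := key2 j
    rw [Finset.sum_range_succ] at this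
    have hd := gf_diag j
    rw [hd, mul_one] at this
    linarith [this]

lemma detP (N : ℕ) : (Matrix.of fun i t : Fin N => bf i t).det = 1 := by
  rw [Matrix.det_of_lowerTriangular]
  · have diag : ∀ i : Fin N, (Matrix.of fun i t : Fin N => bf i t) i i = 1 := by
      intro i
      show bf (i : ℕ) (i : ℕ) = 1
      unfold bf
      rw [show ((i:ℕ) : ℤ) - (i:ℕ) = ((0:ℕ) : ℤ) by push_cast; ring, cb_coe,
        cb_neg (by norm_num)]
      norm_num
    rw [Finset.prod_congr rfl (fun i _ => diag i)]
    simp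
  · intro i t hlt
    have h : i < t := by simpa using hlt
    have h2 : (i : ℕ) < (t : ℕ) := h
    exact bf_zero h2

lemma detS (n : ℕ) :
    (Matrix.of fun t j : Fin (n+1) => gf j t).det = (-1 : ℚ) ^ (n+1) * vv (n+1) := by
  set N := n + 1 with hN
  set Sm : Matrix (Fin N) (Fin N) ℚ := Matrix.of fun t j : Fin N => gf j t with hSm
  set Em : Matrix (Fin N) (Fin N) ℚ :=
    Matrix.of (fun i t : Fin N => if (i : ℕ) = 0 then vv t else if i = t then 1 else 0) with hEm
  set Tm : Matrix (Fin N) (Fin N) ℚ :=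
    Matrix.of (fun t j : Fin N =>
      if (t : ℕ) = n then (if (j : ℕ) = n then -vv N else 0) else gf j ((t : ℕ) + 1)) with hTm
  have detEm : Em.det = 1 := by
    rw [Matrix.det_of_upperTriangular]
    · have diag : ∀ i : Fin N, Em i i = 1 := by
        intro i
        show (if (i : ℕ) = 0 then vv i else if i = i then 1 else 0) = 1
        by_cases h0 : (i : ℕ) = 0
        · rw [if_pos h0, h0]; rfl
        · rw [if_neg h0, if_pos rfl]
      rw [Finset.prod_congr rfl (fun i _ => diag i)]
      simp
    · intro i t hlt
      have h : (t : ℕ) < (i : ℕ) := hlt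
      have h0 : ¬ (i : ℕ) = 0 := by omega
      have hne : ¬ i = t := by
        intro he; rw [he] at h; omega
      show (if (i : ℕ) = 0 then vv t else if i = t then 1 else 0) = 0
      rw [if_neg h0, if_neg hne]
  have detTm : Tm.det = -vv N := by
    rw [Matrix.det_of_upperTriangular]
    · have diag : ∀ t : Fin N, Tm t t = if t = Fin.last n then -vv N else 1 := by
        intro t
        show (if (t : ℕ) = n then (if (t : ℕ) = n then -vv N else 0) else gf t ((t : ℕ) + 1)) = _
        by_cases h : (t : ℕ) = n
        · rw [if_pos h, if_pos h, if_pos (by exact Fin.ext h)]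
        · rw [if_neg h, if_neg (fun he => h (by rw [he]; rfl)), gf_diag]
      rw [Finset.prod_congr rfl (fun t _ => diag t)]
      rw [Finset.prod_ite_eq' Finset.univ (Fin.last n) (fun _ => -vv N)]
      simp
    · intro t j hlt
      have hj : (j : ℕ) < (t : ℕ) := hlt
      show (if (t : ℕ) = n then (if (j : ℕ) = n then -vv N else 0) else gf j ((t : ℕ) + 1)) = 0
      by_cases h : (t : ℕ) = n
      · have hjn : ¬ (j : ℕ) = n := by omega
        rw [if_pos h, if_neg hjn]
      · rw [if_neg h]
        exact gf_zero (by omega)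
  have mulES : Em * Sm = (Tm.submatrix (⇑(finRotate N)⁻¹) id) := by
    ext i j
    rw [Matrix.mul_apply, Matrix.submatrix_apply, id_eq]
    by_cases h0 : (i : ℕ) = 0
    · have hrow : ∑ t : Fin N, Em i t * Sm t j = ∑ t : Fin N, vv t * gf j t := by
        apply Finset.sum_congr rfl
        intro t _
        show (if (i : ℕ) = 0 then vv t else if i = t then 1 else 0) * gf j t = _
        rw [if_pos h0]
      rw [hrow, Fin.sum_univ_eq_sum_range (fun t => vv t * gf j t) N,
        key3 j N j.isLt]
      -- identify σ⁻¹ i = last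
      have hi : i = 0 := Fin.ext (by simpa using h0)
      have hσ : (finRotate N)⁻¹ i = Fin.last n := by
        rw [hi, Equiv.Perm.inv_def, Equiv.symm_apply_eq, finRotate_succ_apply]
        simp
      rw [hσ]
      simp only [hTm, Matrix.of_apply, Fin.val_last, eq_self_iff_true, if_true]
      rw [show N - 1 = n by omega]
    · have hrow : ∑ t : Fin N, Em i t * Sm t j
          = ∑ t : Fin N, (if i = t then 1 else 0) * gf j t := by
        apply Finset.sum_congr rfl
        intro t _
        show (if (i : ℕ) = 0 then vv t else if i = t then 1 else 0) * gf j t = _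
        rw [if_neg h0]
      rw [hrow]
      rw [Finset.sum_eq_single i]
      · rw [if_pos rfl, one_mul]
        have hlt1 : (i : ℕ) - 1 < N := by have := i.isLt; omega
        have happ : (finRotate N) ⟨(i : ℕ) - 1, hlt1⟩ = i := by
          rw [finRotate_succ_apply]
          apply Fin.ext
          rw [Fin.val_add_one]
          rw [if_neg (by
            intro he
            have hval : (i : ℕ) - 1 = n := by simpa using congrArg Fin.val he
            have := i.isLt
            omega)]
          show (i : ℕ) - 1 + 1 = (i : ℕ)
          omega
        have hinv : (finRotate N)⁻¹ i = ⟨(i : ℕ) - 1, hlt1⟩ := by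
          rw [Equiv.Perm.inv_eq_iff_eq]
          exact happ.symm
        have hσ : (((finRotate N)⁻¹ i : Fin N) : ℕ) = (i : ℕ) - 1 := by rw [hinv]
        have hne : ¬ (((finRotate N)⁻¹ i : Fin N) : ℕ) = n := by
          rw [hσ]
          have := i.isLt
          omega
        show gf j (i : ℕ) = (if (((finRotate N)⁻¹ i : Fin N) : ℕ) = n then _ else gf j ((((finRotate N)⁻¹ i : Fin N) : ℕ) + 1))
        rw [if_neg hne, hσ]
        congr 1
        omega
      · intro t _ htne
        rw [if_neg (fun he => htne he.symm), zero_mul]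
      · intro hmem
        exact absurd (Finset.mem_univ i) hmem
  have final : Sm.det = ((Equiv.Perm.sign ((finRotate N)⁻¹) : ℤ) : ℚ) * Tm.det := by
    have h1 : Em.det * Sm.det = (Tm.submatrix (⇑(finRotate N)⁻¹) id).det := by
      rw [← Matrix.det_mul, mulES]
    rw [detEm, one_mul] at h1
    rw [h1, Matrix.det_permute]
  rw [final, detTm]
  have hsign : Equiv.Perm.sign ((finRotate N)⁻¹) = (-1 : ℤˣ) ^ n := by
    rw [Equiv.Perm.sign_inv, sign_finRotate]
    simp [hN]
  rw [hsign]
  have : (((-1 : ℤˣ) ^ n : ℤˣ) : ℤ) = (-1) ^ n := by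
    rw [Units.val_pow_eq_pow_val]; rfl
  rw [this]
  push_cast
  rw [hN]
  ring

lemma conv_e (n : ℕ) : catalanConv 3 ((n : ℤ) - 1) = ef n := by
  cases n with
  | zero =>
    unfold catalanConv ef
    rw [if_neg (by norm_num), cb_neg (by norm_num), cb_neg (by norm_num)]
    ring
  | succ m =>
    unfold catalanConv ef
    have harg : ((m + 1 : ℕ) : ℤ) - 1 = (m : ℤ) := by push_cast; ring
    rw [harg, if_pos (by positivity)]
    have htn : ((m : ℤ)).toNat = m := by omega
    rw [htn]
    have h1 : cb (2 * (m + 1)) ((m : ℕ) : ℤ) = ((2 * m + 2).choose m : ℚ) := by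
      rw [show 2 * (m + 1) = 2 * m + 2 by ring, cb_coe]
    rw [h1]
    cases m with
    | zero =>
      rw [cb_neg (by norm_num)]
      norm_num [Nat.choose]
    | succ s =>
      have h2 : cb (2 * (s + 1 + 1)) (((s + 1 + 1 : ℕ) : ℤ) - 2) = ((2 * (s+1) + 2).choose s : ℚ) := by
        rw [show ((s + 1 + 1 : ℕ) : ℤ) - 2 = ((s : ℕ) : ℤ) by push_cast; ring,
          show 2 * (s + 1 + 1) = 2 * (s + 1) + 2 by ring, cb_coe]
      rw [h2]
      set m := s + 1 with hm
      -- identities: choose (2m+3) m = A + B, A * m = B * (m + 3)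
      have hpascal : ((2 * m + 3).choose m : ℚ) = ((2*m+2).choose m : ℚ) + ((2*m+2).choose s : ℚ) := by
        have : (2 * m + 3) = (2 * m + 2) + 1 := by ring
        rw [this]
        have : m = s + 1 := hm
        rw [this, Nat.choose_succ_succ (2 * m + 2) s]
        push_cast
        rw [hm]
        ring
      have hratio : ((2*m+2).choose m : ℚ) * m = ((2*m+2).choose s : ℚ) * (m + 3) := by
        have h := Nat.choose_succ_right_eq (2 * m + 2) s
        have hsub : 2 * m + 2 - s = m + 3 := by omega
        rw [hsub] at h
        have : ((2*m+2).choose (s+1) * (s+1) : ℚ) = ((2*m+2).choose s * (m+3) : ℚ) := by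
          exact_mod_cast congrArg (fun x : ℕ => (x : ℚ)) h
        rw [hm] at this ⊢
        push_cast at this ⊢
        linarith [this]
      have hne : (2 * (m : ℚ) + 3) ≠ 0 := by positivity
      push_cast
      rw [hpascal]
      field_simp
      have hms : (m : ℚ) = (s : ℚ) + 1 := by rw [hm]; push_cast; ring
      linear_combination (-2 : ℚ) * hratio

lemma hankel_eq (N : ℕ) : hankelDet 3 (-1) N = (-1 : ℚ) ^ N * vv N := by
  cases N with
  | zero =>
    unfold hankelDet
    rw [Matrix.det_isEmpty]
    norm_num [vv]
  | succ n =>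
    set N := n + 1 with hN
    unfold hankelDet
    have hentry : (Matrix.of fun i j : Fin N => catalanConv 3 ((i : ℤ) + (j : ℤ) + (-1)))
        = Matrix.of (fun i j : Fin N => ef ((i : ℕ) + (j : ℕ))) := by
      ext i j
      show catalanConv 3 ((i : ℤ) + (j : ℤ) + (-1)) = ef ((i : ℕ) + (j : ℕ))
      rw [show (i : ℤ) + (j : ℤ) + (-1) = (((i : ℕ) + (j : ℕ) : ℕ) : ℤ) - 1 by push_cast; ring]
      exact conv_e _
    rw [hentry]
    have hfact : Matrix.of (fun i j : Fin N => ef ((i : ℕ) + (j : ℕ)))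
        = (Matrix.of fun i t : Fin N => bf i t) * (Matrix.of fun t j : Fin N => gf j t) := by
      ext i j
      rw [Matrix.mul_apply]
      show ef ((i : ℕ) + (j : ℕ)) = _
      simp only [Matrix.of_apply]
      rw [Fin.sum_univ_eq_sum_range (fun t => bf i t * gf j t) N]
      exact (key1 i j N i.isLt).symm
    rw [hfact, Matrix.det_mul, detP, detS, one_mul]

/-- STATEMENT 8: for all `n ≥ 0`, `D_{3,-1}(3n) = (-1)^n`, `D_{3,-1}(3n+2) = (-1)^(n+1)`,
and `D_{3,-1}(3n+1) = 0`. -/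
theorem stmt8 (n : ℕ) :
    hankelDet 3 (-1) (3 * n) = (-1 : ℚ) ^ n ∧
    hankelDet 3 (-1) (3 * n + 2) = (-1 : ℚ) ^ (n + 1) ∧
    hankelDet 3 (-1) (3 * n + 1) = 0 := by
  have hv0 : vv (3 * n) = 1 := by unfold vv; rw [if_pos (by omega)]
  have hv2 : vv (3 * n + 2) = -1 := by
    unfold vv
    rw [if_neg (by omega), if_pos (by omega)]
  have hv1 : vv (3 * n + 1) = 0 := by
    unfold vv
    rw [if_neg (by omega), if_neg (by omega)]
  refine ⟨?_, ?_, ?_⟩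
  · rw [hankel_eq, hv0, mul_one]
    rw [show 3 * n = n + 2 * n by ring, pow_add, pow_mul]
    norm_num
  · rw [hankel_eq, hv2]
    rw [show 3 * n + 2 = (n + 2 * n) + 2 by ring, pow_add, pow_add, pow_mul, pow_succ]
    ring
  · rw [hankel_eq, hv1, mul_zero]
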